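/- arXiv:1807.06280 — 6 statements merged into one kernel-verified Lean document; each statement's English description precedes it below -/
import Mathlib

section
/- Fix n, m ∈ ℕ. Let S be a real m×m matrix, d ∈ ℝ^m, and let 𝒻 : ℝ^(n+1) → ℝ^m be a continuous map. Let L_p and L_q be real (n+1)×(n+1) lower triangular matrices with all diagonal entries equal to 1, and for θ ∈ ℝ^(n+1) let D_θ = diag(θ_0,…,θ_n) and L_θ = (I − D_θ)L_p + D_θ L_q. Fix an exponent vector (p_0,…,p_n) with each p_j ∈ {1,2}, parameters r > 0, γ̄ > 0, β ∈ ℝ with rβ > 3/2, η > 0, and let L₁ be the (n+1)×(n+1) lower bidiagonal matrix with 1 on the diagonal and −1 on the subdiagonal. Define, for f ∈ ℝ^(n+1), γ ∈ (0,∞)^(n+1), θ ∈ [0,1]^(n+1), T(f,γ,θ) = (1/2)‖S(d − 𝒻(f))‖₂² + (1/2)Σ_{j=0}^{n} γ_j^{−p_j/2}|(L_θ f)_j|^{p_j} + (1/2)Σ_{j=0}^{n} log γ_j + Σ_{j=0}^{n}(γ_j/γ̄)^r − (rβ − 1)Σ_{j=0}^{n} log γ_j + (1/(2η))‖L₁θ‖₂².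 Then T attains its infimum on ℝ^(n+1) × (0,∞)^(n+1) × [0,1]^(n+1), i.e., the minimization problem has a solution. -/
open Matrix Finset

/-- Squared Euclidean norm of a vector. -/
noncomputable def enormSq {m : ℕ} (x : Fin m → ℝ) : ℝ := ∑ i, (x i) ^ 2

/-- The combined matrix `L_θ = (I − D_θ) L_p + D_θ L_q`. -/
noncomputable def Lcomb {n : ℕ} (Lp Lq : Matrix (Fin (n + 1)) (Fin (n + 1)) ℝ)
    (θ : Fin (n + 1) → ℝ) : Matrix (Fin (n + 1)) (Fin (n + 1)) ℝ :=
  (1 - Matrix.diagonal θ) * Lp + Matrix.diagonal θ * Lq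

/-- The lower bidiagonal finite-difference matrix `L₁` with `1` on the diagonal and `−1`
on the subdiagonal. -/
noncomputable def Lone (n : ℕ) : Matrix (Fin (n + 1)) (Fin (n + 1)) ℝ :=
  fun i j => if i = j then 1 else if (j : ℕ) + 1 = (i : ℕ) then -1 else 0

lemma enormSq_nonneg {m : ℕ} (x : Fin m → ℝ) : 0 ≤ enormSq x := by
  unfold enormSq; exact Finset.sum_nonneg fun i _ => sq_nonneg _

/-- Unit-lower-triangular solve bound: the sum formula. -/
lemma tri_sum {n : ℕ} (M : Matrix (Fin (n+1)) (Fin (n+1)) ℝ)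
    (hdiag : ∀ i, M i i = 1) (hup : ∀ i j, i < j → M i j = 0)
    (f : Fin (n+1) → ℝ) (i : Fin (n+1)) :
    M.mulVec f i = f i + ∑ j ∈ Finset.Iio i, M i j * f j := by
  have h1 : ∑ j ∈ Finset.Iic i, M i j * f j = ∑ j, M i j * f j := by
    apply Finset.sum_subset (Finset.subset_univ _)
    intro x _ hx
    rw [hup i x (by simpa using hx)]; ring
  rw [Matrix.mulVec, dotProduct, ← h1, ← Finset.Iio_insert, Finset.sum_insert (by simp),
    hdiag, one_mul]

/-- Forward substitution bound for unit lower triangular systems. -/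
lemma tri_bound {n : ℕ} (M : Matrix (Fin (n+1)) (Fin (n+1)) ℝ)
    (hdiag : ∀ i, M i i = 1) (hup : ∀ i j, i < j → M i j = 0)
    (C K : ℝ) (hC : 0 ≤ C) (hM : ∀ i j, |M i j| ≤ C)
    (f : Fin (n+1) → ℝ) (hy : ∀ j, |M.mulVec f j| ≤ K) :
    ∀ i, |f i| ≤ K * (1+C)^(i:ℕ) := by
  have main : ∀ k : ℕ, ∀ i : Fin (n+1), (i:ℕ) = k → |f i| ≤ K * (1+C)^(i:ℕ) := by
    intro k
    induction k using Nat.strong_induction_on with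
    | _ k ih =>
      intro i hik
      have hfi : f i = M.mulVec f i - ∑ j ∈ Finset.Iio i, M i j * f j := by
        rw [tri_sum M hdiag hup f i]; ring
      have hsum : |∑ j ∈ Finset.Iio i, M i j * f j|
          ≤ ∑ j ∈ Finset.Iio i, C * (K * (1+C)^(j:ℕ)) := by
        refine (Finset.abs_sum_le_sum_abs _ _).trans (Finset.sum_le_sum ?_)
        intro j hj
        have hj' : j < i := Finset.mem_Iio.mp hj
        have hfj : |f j| ≤ K * (1+C)^(j:ℕ) := ih j (hik ▸ hj') j rfl
        rw [abs_mul]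
        exact mul_le_mul (hM i j) hfj (abs_nonneg _) hC
      have hgeom : ∑ j ∈ Finset.Iio i, C * (K * (1+C)^(j:ℕ))
          = C * K * ∑ t ∈ Finset.range (i:ℕ), (1+C)^t := by
        rw [Finset.mul_sum]
        have := Finset.sum_map (Finset.Iio i) Fin.valEmbedding (fun t => C * K * (1+C)^t)
        rw [Fin.map_valEmbedding_Iio] at this
        rw [← Nat.Iio_eq_range, this]
        apply Finset.sum_congr rfl
        intro j _; simp [Fin.valEmbedding]; ring
      have hg2 : C * K * ∑ t ∈ Finset.range (i:ℕ), (1+C)^t = K * ((1+C)^(i:ℕ) - 1) := by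
        have := geom_sum_mul (1+C) (i:ℕ)
        have h' : (∑ t ∈ Finset.range (i:ℕ), (1+C)^t) * C = (1+C)^(i:ℕ) - 1 := by
          simpa using this
        calc C * K * ∑ t ∈ Finset.range (i:ℕ), (1+C)^t
            = K * ((∑ t ∈ Finset.range (i:ℕ), (1+C)^t) * C) := by ring
          _ = K * ((1+C)^(i:ℕ) - 1) := by rw [h']
      calc |f i| ≤ |M.mulVec f i| + |∑ j ∈ Finset.Iio i, M i j * f j| := by
            rw [hfi]; exact abs_sub _ _
        _ ≤ K + (K * ((1+C)^(i:ℕ) - 1)) := by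
            refine add_le_add (hy i) (hsum.trans ?_)
            rw [hgeom, hg2]
        _ = K * (1+C)^(i:ℕ) := by ring
  exact fun i => main (i:ℕ) i rfl

/-- Tangent-line bound: `c log t + const ≤ (t/γb)^r`. -/
lemma log_tangent (r c γb t : ℝ) (hr : 0 < r) (hc : 0 < c) (hγb : 0 < γb) (ht : 0 < t) :
    c * Real.log t + ((c/r) * (1 - Real.log (c/r)) - c * Real.log γb) ≤ (t/γb) ^ (r:ℝ) := by
  have hu : 0 < t / γb := div_pos ht hγb
  have hlam : 0 < c / r := div_pos hc hr
  have h1 : (t/γb) ^ (r:ℝ) = Real.exp (Real.log (t/γb) * r) := Real.rpow_def_of_pos hu r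
  set z : ℝ := Real.log (t/γb) * r - Real.log (c/r) with hz
  have h2 : Real.exp (Real.log (t/γb) * r) = (c/r) * Real.exp z := by
    rw [hz, Real.exp_sub, Real.exp_log hlam]; field_simp
  have h3 : z + 1 ≤ Real.exp z := Real.add_one_le_exp z
  have h4 : (c/r) * (z + 1) ≤ (c/r) * Real.exp z :=
    mul_le_mul_of_nonneg_left h3 (le_of_lt hlam)
  have h5 : (c/r) * (z + 1) = c * Real.log (t/γb) + (c/r) * (1 - Real.log (c/r)) := by
    rw [hz]; field_simp; ring
  have hlog : Real.log (t/γb) = Real.log t - Real.log γb :=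
    Real.log_div (ne_of_gt ht) (ne_of_gt hγb)
  calc c * Real.log t + ((c/r) * (1 - Real.log (c/r)) - c * Real.log γb)
      = c * Real.log (t/γb) + (c/r) * (1 - Real.log (c/r)) := by rw [hlog]; ring
    _ = (c/r) * (z+1) := h5.symm
    _ ≤ (c/r) * Real.exp z := h4
    _ = (t/γb) ^ (r:ℝ) := by rw [h1, h2]

lemma Lcomb_apply {n : ℕ} (Lp Lq : Matrix (Fin (n + 1)) (Fin (n + 1)) ℝ)
    (θ : Fin (n + 1) → ℝ) (i k : Fin (n + 1)) :
    Lcomb Lp Lq θ i k = Lp i k - θ i * Lp i k + θ i * Lq i k := by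
  simp [Lcomb, Matrix.sub_mul, Matrix.add_apply, Matrix.sub_apply, Matrix.diagonal_mul,
    Matrix.one_mul]

lemma Lcomb_mulVec {n : ℕ} (Lp Lq : Matrix (Fin (n + 1)) (Fin (n + 1)) ℝ)
    (θ f : Fin (n + 1) → ℝ) (j : Fin (n + 1)) :
    (Lcomb Lp Lq θ).mulVec f j = ∑ k, (Lp j k - θ j * Lp j k + θ j * Lq j k) * f k := by
  simp [Matrix.mulVec, dotProduct, Lcomb_apply]

/-- The product state space. -/
abbrev Xsp (n : ℕ) := ((Fin (n + 1) → ℝ) × ((Fin (n + 1) → ℝ) × (Fin (n + 1) → ℝ)))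

lemma cont_mv {n : ℕ} (Lp Lq : Matrix (Fin (n + 1)) (Fin (n + 1)) ℝ) (j : Fin (n + 1)) :
    Continuous (fun x : Xsp n => (Lcomb Lp Lq x.2.2).mulVec x.1 j) := by
  simp only [Lcomb_mulVec]
  fun_prop

lemma cont_misfit {n m : ℕ} (S : Matrix (Fin m) (Fin m) ℝ) (d : Fin m → ℝ)
    (F : (Fin (n + 1) → ℝ) → (Fin m → ℝ)) (hF : Continuous F) :
    Continuous (fun x : Xsp n => enormSq (S.mulVec (d - F x.1))) := by
  unfold enormSq Matrix.mulVec dotProduct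
  simp only [Pi.sub_apply]
  fun_prop

lemma cont_lone {n : ℕ} : Continuous (fun x : Xsp n => enormSq ((Lone n).mulVec x.2.2)) := by
  unfold enormSq Matrix.mulVec dotProduct
  fun_prop

lemma cont_T {n m : ℕ} (S : Matrix (Fin m) (Fin m) ℝ) (d : Fin m → ℝ)
    (F : (Fin (n + 1) → ℝ) → (Fin m → ℝ)) (hF : Continuous F)
    (Lp Lq : Matrix (Fin (n + 1)) (Fin (n + 1)) ℝ)
    (p : Fin (n + 1) → ℝ) (hp : ∀ j, p j = 1 ∨ p j = 2) (r γbar β η : ℝ) (hr : 0 < r) :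
    ContinuousOn (fun x : Xsp n =>
      (1 / 2) * enormSq (S.mulVec (d - F x.1))
      + (1 / 2) * ∑ j, (x.2.1 j) ^ (-(p j) / 2) * |(Lcomb Lp Lq x.2.2).mulVec x.1 j| ^ (p j)
      + (1 / 2) * ∑ j, Real.log (x.2.1 j)
      + ∑ j, (x.2.1 j / γbar) ^ r
      - (r * β - 1) * ∑ j, Real.log (x.2.1 j)
      + (1 / (2 * η)) * enormSq ((Lone n).mulVec x.2.2))
      {x : Xsp n | ∀ j, x.2.1 j ≠ 0} := by
  have hγ : ∀ j : Fin (n+1), Continuous (fun x : Xsp n => x.2.1 j) := by fun_prop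
  have hlog : ContinuousOn (fun x : Xsp n => ∑ j, Real.log (x.2.1 j))
      {x : Xsp n | ∀ j, x.2.1 j ≠ 0} := by
    apply continuousOn_finset_sum
    intro j _
    exact ContinuousOn.log (hγ j).continuousOn (fun x hx => hx j)
  have hB : ContinuousOn (fun x : Xsp n =>
      ∑ j, (x.2.1 j) ^ (-(p j) / 2) * |(Lcomb Lp Lq x.2.2).mulVec x.1 j| ^ (p j))
      {x : Xsp n | ∀ j, x.2.1 j ≠ 0} := by
    apply continuousOn_finset_sum
    intro j _
    have h1 : ContinuousOn (fun x : Xsp n => (x.2.1 j) ^ (-(p j) / 2))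
        {x : Xsp n | ∀ j, x.2.1 j ≠ 0} :=
      ContinuousOn.rpow_const (hγ j).continuousOn (fun x hx => Or.inl (hx j))
    have hpj : (0:ℝ) ≤ p j := by rcases hp j with h | h <;> rw [h] <;> norm_num
    have h2 : Continuous (fun x : Xsp n => |(Lcomb Lp Lq x.2.2).mulVec x.1 j| ^ (p j)) :=
      Continuous.rpow_const (cont_mv Lp Lq j).abs (fun x => Or.inr hpj)
    exact h1.mul h2.continuousOn
  have hpow : Continuous (fun x : Xsp n => ∑ j, (x.2.1 j / γbar) ^ r) := by
    apply continuous_finset_sum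
    intro j _
    exact Continuous.rpow_const ((hγ j).div_const γbar) (fun x => Or.inr hr.le)
  exact ((((((cont_misfit S d F hF).continuousOn.const_smul (1/2:ℝ)).add
      (hB.const_smul (1/2:ℝ))).add (hlog.const_smul (1/2:ℝ))).add
      hpow.continuousOn).sub (hlog.const_smul (r*β-1))).add
      ((cont_lone.continuousOn).const_smul (1/(2*η)))

set_option maxHeartbeats 1000000 in
/-- the adaptive augmented regularization functional `T` attains its infimum on
`ℝ^(n+1) × (0,∞)^(n+1) × [0,1]^(n+1)`. -/
theorem stmt1 (n m : ℕ) (S : Matrix (Fin m) (Fin m) ℝ) (d : Fin m → ℝ)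
    (F : (Fin (n + 1) → ℝ) → (Fin m → ℝ)) (hF : Continuous F)
    (Lp Lq : Matrix (Fin (n + 1)) (Fin (n + 1)) ℝ)
    (hLpLow : ∀ i j : Fin (n + 1), i < j → Lp i j = 0)
    (hLpDiag : ∀ i : Fin (n + 1), Lp i i = 1)
    (hLqLow : ∀ i j : Fin (n + 1), i < j → Lq i j = 0)
    (hLqDiag : ∀ i : Fin (n + 1), Lq i i = 1)
    (p : Fin (n + 1) → ℝ) (hp : ∀ j, p j = 1 ∨ p j = 2)
    (r γbar β η : ℝ) (hr : 0 < r) (hγbar : 0 < γbar) (hβ : 3 / 2 < r * β) (hη : 0 < η)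
    (T : (Fin (n + 1) → ℝ) → (Fin (n + 1) → ℝ) → (Fin (n + 1) → ℝ) → ℝ)
    (hT : ∀ f γ θ, T f γ θ =
      (1 / 2) * enormSq (S.mulVec (d - F f))
      + (1 / 2) * ∑ j, (γ j) ^ (-(p j) / 2) * |(Lcomb Lp Lq θ).mulVec f j| ^ (p j)
      + (1 / 2) * ∑ j, Real.log (γ j)
      + ∑ j, (γ j / γbar) ^ r
      - (r * β - 1) * ∑ j, Real.log (γ j)
      + (1 / (2 * η)) * enormSq ((Lone n).mulVec θ)) :
    ∃ (f γ θ : Fin (n + 1) → ℝ), (∀ j, 0 < γ j) ∧ (∀ j, θ j ∈ Set.Icc (0 : ℝ) 1) ∧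
      ∀ (f' γ' θ' : Fin (n + 1) → ℝ), (∀ j, 0 < γ' j) → (∀ j, θ' j ∈ Set.Icc (0 : ℝ) 1) →
        T f γ θ ≤ T f' γ' θ' := by
  classical
  -- notation
  obtain ⟨c0, hc0def⟩ : ∃ c0 : ℝ, c0 = r * β - 3/2 := ⟨_, rfl⟩
  have hc0 : 0 < c0 := by simp only [hc0def]; linarith
  obtain ⟨φ, hφdef⟩ : ∃ φ : ℝ → ℝ, φ = fun t => (t/γbar) ^ (r:ℝ) - c0 * Real.log t := ⟨_, rfl⟩
  obtain ⟨Klb, hKlbdef⟩ : ∃ K : ℝ → ℝ, K = fun c => (c/r) * (1 - Real.log (c/r)) - c * Real.log γbar := ⟨_, rfl⟩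
  obtain ⟨φ0, hφ0def⟩ : ∃ x : ℝ, x = Klb c0 := ⟨_, rfl⟩
  have hφlb : ∀ t : ℝ, 0 < t → φ0 ≤ φ t := by
    intro t ht
    have := log_tangent r c0 γbar t hr hc0 hγbar ht
    simp only [hφ0def, hφdef, hKlbdef]; linarith
  have hφup : ∀ t : ℝ, 0 < t → Real.log t + Klb (c0+1) ≤ φ t := by
    intro t ht
    have := log_tangent r (c0+1) γbar t hr (by linarith) hγbar ht
    simp only [hφdef, hKlbdef] at this ⊢; linarith
  have hφ0 : ∀ t : ℝ, 0 < t → -(c0 * Real.log t) ≤ φ t := by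
    intro t ht
    have : (0:ℝ) ≤ (t/γbar) ^ (r:ℝ) := Real.rpow_nonneg (div_nonneg ht.le hγbar.le) r
    simp only [hφdef, hKlbdef]; linarith
  -- decomposition of T
  have Tdecomp : ∀ f γ θ, T f γ θ =
      (1 / 2) * enormSq (S.mulVec (d - F f))
      + (1 / 2) * ∑ j, (γ j) ^ (-(p j) / 2) * |(Lcomb Lp Lq θ).mulVec f j| ^ (p j)
      + (∑ j, φ (γ j))
      + (1 / (2 * η)) * enormSq ((Lone n).mulVec θ) := by
    intro f γ θ
    have hs : ∑ j, φ (γ j)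
        = ∑ j, (γ j / γbar) ^ (r:ℝ) - c0 * ∑ j, Real.log (γ j) := by
      simp only [hφdef]
      rw [Finset.mul_sum, ← Finset.sum_sub_distrib]
    rw [hT, hs, hc0def]; ring
  -- nonnegativity facts
  have hA : ∀ f, 0 ≤ (1 / 2) * enormSq (S.mulVec (d - F f)) := fun f =>
    mul_nonneg (by norm_num) (enormSq_nonneg _)
  have hCn : ∀ θ, 0 ≤ (1 / (2 * η)) * enormSq ((Lone n).mulVec θ) := fun θ =>
    mul_nonneg (by positivity) (enormSq_nonneg _)
  have hBterm : ∀ (f γ θ : Fin (n+1) → ℝ), (∀ j, 0 ≤ γ j) → ∀ j,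
      0 ≤ (γ j) ^ (-(p j) / 2) * |(Lcomb Lp Lq θ).mulVec f j| ^ (p j) := by
    intro f γ θ hγ j
    exact mul_nonneg (Real.rpow_nonneg (hγ j) _) (Real.rpow_nonneg (abs_nonneg _) _)
  have hBn : ∀ (f γ θ : Fin (n+1) → ℝ), (∀ j, 0 ≤ γ j) →
      0 ≤ (1 / 2) * ∑ j, (γ j) ^ (-(p j) / 2) * |(Lcomb Lp Lq θ).mulVec f j| ^ (p j) := by
    intro f γ θ hγ
    exact mul_nonneg (by norm_num) (Finset.sum_nonneg fun j _ => hBterm f γ θ hγ j)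
  -- constants
  obtain ⟨M, hMdef⟩ : ∃ M : ℝ, M = T 0 (fun _ => γbar) 0 := ⟨_, rfl⟩
  obtain ⟨Mφ, hMφdef⟩ : ∃ x : ℝ, x = M - n * φ0 := ⟨_, rfl⟩
  obtain ⟨MB, hMBdef⟩ : ∃ x : ℝ, x = M - (n+1) * φ0 := ⟨_, rfl⟩
  obtain ⟨a, hadef⟩ : ∃ x : ℝ, x = Real.exp (-(Mφ/c0)) := ⟨_, rfl⟩
  obtain ⟨b, hbdef⟩ : ∃ x : ℝ, x = Real.exp (Mφ - Klb (c0+1)) := ⟨_, rfl⟩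
  have ha0 : 0 < a := hadef ▸ Real.exp_pos _
  have hb0 : 0 < b := hbdef ▸ Real.exp_pos _
  obtain ⟨cb, hcbdef⟩ : ∃ x : ℝ, x = min (b ^ (-(1:ℝ)/2)) (b ^ (-(2:ℝ)/2)) := ⟨_, rfl⟩
  have hcb : 0 < cb := hcbdef ▸ lt_min (Real.rpow_pos_of_pos hb0 _) (Real.rpow_pos_of_pos hb0 _)
  obtain ⟨Q, hQdef⟩ : ∃ x : ℝ, x = 2 * MB / cb := ⟨_, rfl⟩
  obtain ⟨Ky, hKydef⟩ : ∃ x : ℝ, x = max Q (Real.sqrt Q) := ⟨_, rfl⟩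
  obtain ⟨C0, hC0def⟩ : ∃ x : ℝ, x = ∑ i, ∑ k, (2 * |Lp i k| + |Lq i k|) := ⟨_, rfl⟩
  have hC0 : 0 ≤ C0 := hC0def ▸ (Finset.sum_nonneg fun i _ => Finset.sum_nonneg fun k _ => by positivity)
  obtain ⟨R, hRdef⟩ : ∃ x : ℝ, x = Ky * (1 + C0) ^ n := ⟨_, rfl⟩
  -- properties of Lcomb for θ ∈ [0,1]
  have hdiagθ : ∀ θ : Fin (n+1) → ℝ, ∀ i, Lcomb Lp Lq θ i i = 1 := by
    intro θ i; rw [Lcomb_apply, hLpDiag, hLqDiag]; ring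
  have hupθ : ∀ θ : Fin (n+1) → ℝ, ∀ i j, i < j → Lcomb Lp Lq θ i j = 0 := by
    intro θ i j hij; rw [Lcomb_apply, hLpLow i j hij, hLqLow i j hij]; ring
  have hent : ∀ θ : Fin (n+1) → ℝ, (∀ j, θ j ∈ Set.Icc (0:ℝ) 1) →
      ∀ i k, |Lcomb Lp Lq θ i k| ≤ C0 := by
    intro θ hθ i k
    obtain ⟨h0, h1⟩ := hθ i
    have step : |Lcomb Lp Lq θ i k| ≤ 2 * |Lp i k| + |Lq i k| := by
      rw [Lcomb_apply]
      calc |Lp i k - θ i * Lp i k + θ i * Lq i k|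
          ≤ |Lp i k - θ i * Lp i k| + |θ i * Lq i k| := abs_add_le _ _
        _ ≤ (|Lp i k| + |θ i * Lp i k|) + |θ i * Lq i k| := by
            exact add_le_add_left (abs_sub _ _) _
        _ ≤ (|Lp i k| + |Lp i k|) + |Lq i k| := by
            have e : |θ i| = θ i := abs_of_nonneg h0
            rw [abs_mul, abs_mul, e]
            have b1 : θ i * |Lp i k| ≤ 1 * |Lp i k| :=
              mul_le_mul_of_nonneg_right h1 (abs_nonneg _)
            have b2 : θ i * |Lq i k| ≤ 1 * |Lq i k| :=
              mul_le_mul_of_nonneg_right h1 (abs_nonneg _)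
            rw [one_mul] at b1 b2
            linarith
        _ = 2 * |Lp i k| + |Lq i k| := by ring
    rw [hC0def]
    refine step.trans ?_
    have inner : 2 * |Lp i k| + |Lq i k| ≤ ∑ k', (2 * |Lp i k'| + |Lq i k'|) :=
      Finset.single_le_sum (f := fun k' => 2 * |Lp i k'| + |Lq i k'|)
        (fun k' _ => by positivity) (Finset.mem_univ k)
    refine inner.trans ?_
    exact Finset.single_le_sum (f := fun i' => ∑ k', (2 * |Lp i' k'| + |Lq i' k'|))
      (fun i' _ => Finset.sum_nonneg fun k' _ => by positivity) (Finset.mem_univ i)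
  -- the key sublevel-set bound
  have key : ∀ f γ θ, (∀ j, 0 < γ j) → (∀ j, θ j ∈ Set.Icc (0:ℝ) 1) → T f γ θ ≤ M →
      (∀ i, -R ≤ f i ∧ f i ≤ R) ∧ (∀ j, a ≤ γ j ∧ γ j ≤ b) := by
    intro f γ θ hγ hθ hTle
    have hdec := Tdecomp f γ θ
    have hAx := hA f
    have hCx := hCn θ
    have hBx := hBn f γ θ (fun j => (hγ j).le)
    -- sum of φ bounds
    have hφsum_lb : ∀ s : Finset (Fin (n+1)), (s.card : ℝ) * φ0 ≤ ∑ j ∈ s, φ (γ j) := by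
      intro s
      have := Finset.card_nsmul_le_sum s (fun j => φ (γ j)) φ0 (fun j _ => hφlb _ (hγ j))
      simpa [nsmul_eq_mul] using this
    have hcard : (Finset.univ : Finset (Fin (n+1))).card = n + 1 := by simp
    have hφall : ((n:ℝ)+1) * φ0 ≤ ∑ j, φ (γ j) := by
      have := hφsum_lb Finset.univ
      rw [hcard] at this
      push_cast at this
      linarith
    -- γ bounds
    have hγb : ∀ j, a ≤ γ j ∧ γ j ≤ b := by
      intro j
      have herase : φ (γ j) + ∑ k ∈ Finset.univ.erase j, φ (γ k) = ∑ k, φ (γ k) :=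
        Finset.add_sum_erase _ (fun k => φ (γ k)) (Finset.mem_univ j)
      have hcard' : ((Finset.univ.erase j).card : ℝ) = n := by
        rw [Finset.card_erase_of_mem (Finset.mem_univ j), hcard]; push_cast; ring
      have hrest : (n:ℝ) * φ0 ≤ ∑ k ∈ Finset.univ.erase j, φ (γ k) := by
        have := hφsum_lb (Finset.univ.erase j)
        rwa [hcard'] at this
      have hφj : φ (γ j) ≤ Mφ := by
        rw [hMφdef]
        have : φ (γ j) + (n:ℝ) * φ0 ≤ ∑ k, φ (γ k) := by
          rw [← herase]; linarith
        linarith [hdec ▸ hTle, hAx, hBx, hCx,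
          show ∑ k, φ (γ k) ≤ M - ((1 / 2) * enormSq (S.mulVec (d - F f))
            + (1 / 2) * ∑ j', (γ j') ^ (-(p j') / 2) * |(Lcomb Lp Lq θ).mulVec f j'| ^ (p j')
            + (1 / (2 * η)) * enormSq ((Lone n).mulVec θ)) from by
              rw [hdec] at hTle; linarith]
      constructor
      · have h1 : -(c0 * Real.log (γ j)) ≤ Mφ := le_trans (hφ0 _ (hγ j)) hφj
        have h2 : -(Mφ/c0) ≤ Real.log (γ j) := by
          rw [neg_le, le_div_iff₀ hc0]
          nlinarith [h1]
        calc a = Real.exp (-(Mφ/c0)) := hadef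
          _ ≤ Real.exp (Real.log (γ j)) := Real.exp_le_exp.mpr h2
          _ = γ j := Real.exp_log (hγ j)
      · have h1 : Real.log (γ j) + Klb (c0+1) ≤ Mφ := le_trans (hφup _ (hγ j)) hφj
        calc γ j = Real.exp (Real.log (γ j)) := (Real.exp_log (hγ j)).symm
          _ ≤ Real.exp (Mφ - Klb (c0+1)) := Real.exp_le_exp.mpr (by linarith)
          _ = b := hbdef.symm
    refine ⟨?_, hγb⟩
    -- B bound and f bound
    have hBle : (1 / 2) * ∑ j, (γ j) ^ (-(p j) / 2) * |(Lcomb Lp Lq θ).mulVec f j| ^ (p j)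
        ≤ MB := by
      rw [hMBdef]
      rw [hdec] at hTle
      linarith [hφall, hAx, hCx]
    have hterm : ∀ j, (γ j) ^ (-(p j) / 2) * |(Lcomb Lp Lq θ).mulVec f j| ^ (p j)
        ≤ 2 * MB := by
      intro j
      have hsingle := Finset.single_le_sum
        (f := fun j' => (γ j') ^ (-(p j') / 2) * |(Lcomb Lp Lq θ).mulVec f j'| ^ (p j'))
        (fun j' _ => hBterm f γ θ (fun k => (hγ k).le) j') (Finset.mem_univ j)
      linarith
    have hcoef : ∀ j, cb ≤ (γ j) ^ (-(p j) / 2) := by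
      intro j
      have hple : -(p j) / 2 ≤ 0 := by
        rcases hp j with h | h <;> rw [h] <;> norm_num
      have hle : b ^ (-(p j) / 2) ≤ (γ j) ^ (-(p j) / 2) :=
        Real.rpow_le_rpow_of_nonpos (hγ j) (hγb j).2 hple
      refine le_trans ?_ hle
      rw [hcbdef]
      rcases hp j with h | h <;> rw [h]
      · exact min_le_left _ _
      · exact min_le_right _ _
    have hyb : ∀ j, |(Lcomb Lp Lq θ).mulVec f j| ≤ Ky := by
      intro j
      set y := |(Lcomb Lp Lq θ).mulVec f j| with hydef
      have hy0 : 0 ≤ y := abs_nonneg _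
      have hyp : y ^ (p j) ≤ Q := by
        rw [hQdef]
        have h1 : cb * y ^ (p j) ≤ (γ j) ^ (-(p j) / 2) * y ^ (p j) :=
          mul_le_mul_of_nonneg_right (hcoef j) (Real.rpow_nonneg hy0 _)
        have h2 : cb * y ^ (p j) ≤ 2 * MB := le_trans h1 (hterm j)
        rw [le_div_iff₀ hcb]
        linarith [h2]
      rw [hKydef]
      rcases hp j with h | h
      · rw [h, Real.rpow_one] at hyp
        exact le_trans hyp (le_max_left _ _)
      · rw [h] at hyp
        have hQ0 : 0 ≤ Q := le_trans (Real.rpow_nonneg hy0 2) hyp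
        have : y ^ (2:ℕ) ≤ Q := by
          rwa [show ((2:ℝ)) = ((2:ℕ):ℝ) from by norm_num, Real.rpow_natCast] at hyp
        have := (Real.le_sqrt hy0 hQ0).mpr this
        exact le_trans this (le_max_right _ _)
    have hfb := tri_bound (Lcomb Lp Lq θ) (hdiagθ θ) (hupθ θ) C0 Ky hC0
      (hent θ hθ) f hyb
    intro i
    have hKy0 : 0 ≤ Ky := hKydef ▸ le_trans (Real.sqrt_nonneg Q) (le_max_right _ _)
    have hpow : (1+C0)^(i:ℕ) ≤ (1+C0)^n :=
      pow_le_pow_right₀ (by linarith) (Nat.lt_succ_iff.mp i.isLt)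
    have hiR : |f i| ≤ R := by
      rw [hRdef]
      exact le_trans (hfb i) (mul_le_mul_of_nonneg_left hpow hKy0)
    exact ⟨neg_le_of_abs_le hiR, le_of_abs_le hiR⟩
  -- the compact set
  obtain ⟨Kset, hKdef⟩ : ∃ K : Set (Xsp n),
      K = (Set.Icc (fun _ => -R) (fun _ => R)) ×ˢ
        ((Set.Icc (fun _ => a) (fun _ => b)) ×ˢ (Set.Icc (0 : Fin (n+1) → ℝ) 1)) := ⟨_, rfl⟩
  have hKcomp : IsCompact Kset := hKdef ▸ (isCompact_Icc.prod (isCompact_Icc.prod isCompact_Icc))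
  have hmem : ∀ f γ θ : Fin (n+1) → ℝ,
      ((∀ i, -R ≤ f i ∧ f i ≤ R) ∧ (∀ j, a ≤ γ j ∧ γ j ≤ b) ∧
        (∀ j, θ j ∈ Set.Icc (0:ℝ) 1)) → ((f, (γ, θ)) : Xsp n) ∈ Kset := by
    intro f γ θ ⟨h1, h2, h3⟩
    rw [hKdef]
    refine ⟨⟨fun i => (h1 i).1, fun i => (h1 i).2⟩,
      ⟨fun j => (h2 j).1, fun j => (h2 j).2⟩, ?_, ?_⟩
    · intro j; exact (h3 j).1
    · intro j; exact (h3 j).2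
  -- base point is in Kset
  have hbase_pos : ∀ j, (0:ℝ) < (fun _ : Fin (n+1) => γbar) j := fun _ => hγbar
  have hbase_θ : ∀ j, ((0 : Fin (n+1) → ℝ)) j ∈ Set.Icc (0:ℝ) 1 := fun _ => by
    simp [Set.mem_Icc]
  have hbaseK : ((0, ((fun _ => γbar), 0)) : Xsp n) ∈ Kset := by
    obtain ⟨h1, h2⟩ := key 0 (fun _ => γbar) 0 hbase_pos hbase_θ (le_of_eq hMdef.symm)
    exact hmem _ _ _ ⟨h1, h2, hbase_θ⟩
  -- continuity of T on Kset
  have hKsub : Kset ⊆ {x : Xsp n | ∀ j, x.2.1 j ≠ 0} := by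
    rw [hKdef]
    rintro ⟨f, γ, θ⟩ ⟨_, ⟨hγl, _⟩, _⟩ j
    have : a ≤ γ j := hγl j
    exact ne_of_gt (lt_of_lt_of_le ha0 this)
  have hcontG : ContinuousOn (fun x : Xsp n => T x.1 x.2.1 x.2.2) Kset := by
    apply ContinuousOn.congr (((cont_T S d F hF Lp Lq p hp r γbar β η hr).mono hKsub))
    intro x _
    exact hT x.1 x.2.1 x.2.2
  -- get a minimizer on Kset
  obtain ⟨xm, hxmK, hxmMin⟩ := hKcomp.exists_isMinOn ⟨_, hbaseK⟩ hcontG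
  rw [hKdef] at hxmK
  obtain ⟨hf1, ⟨hγ1, hγ2⟩, hθ1⟩ := hxmK
  refine ⟨xm.1, xm.2.1, xm.2.2, ?_, ?_, ?_⟩
  · intro j; exact lt_of_lt_of_le ha0 (hγ1 j)
  · intro j; exact ⟨hθ1.1 j, hθ1.2 j⟩
  · intro f' γ' θ' hγ' hθ'
    by_cases hcase : T f' γ' θ' ≤ M
    · obtain ⟨h1, h2⟩ := key f' γ' θ' hγ' hθ' hcase
      exact (isMinOn_iff.mp hxmMin) _ (hmem f' γ' θ' ⟨h1, h2, hθ'⟩)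
    · push_neg at hcase
      have h1 : T xm.1 xm.2.1 xm.2.2 ≤ M :=
        le_trans ((isMinOn_iff.mp hxmMin) _ hbaseK) (le_of_eq hMdef.symm)
      linarith
end

section
/- Let S be a real m×m matrix, A a real m×n matrix, d ∈ ℝ^m, M an invertible real n×n matrix, and let Ω₁, Ω₂ be two disjoint sets with Ω₁ ∪ Ω₂ = {1,…,n}. Define J : ℝ^n → ℝ by J(f) = (1/2)‖S(d − Af)‖₂² + (1/2)Σ_{ℓ∈Ω₁}|(Mf)_ℓ| + (1/2)Σ_{ℓ∈Ω₂}(Mf)_ℓ². Then J is convex and attains its infimum on ℝ^n (the minimization problem has a solution). -/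
open Matrix Finset Filter

/-- Composition of a convex function on ℝ with an affine function is convex. -/
lemma convexOn_comp_affine {n : ℕ} {φ : ℝ → ℝ} (hφ : ConvexOn ℝ Set.univ φ)
    (L : (Fin n → ℝ) →ₗ[ℝ] ℝ) (c : ℝ) :
    ConvexOn ℝ Set.univ (fun f => φ (c + L f)) := by
  refine ⟨convex_univ, fun x _ y _ a b ha hb hab => ?_⟩
  have h : c + L (a • x + b • y) = a • (c + L x) + b • (c + L y) := by
    simp only [map_add, _root_.map_smul, smul_eq_mul]
    linear_combination (-c) * hab
  simp only [h]
  exact hφ.2 (Set.mem_univ _) (Set.mem_univ _) ha hb hab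

lemma convexOn_finset_sum {ι : Type*} {n : ℕ} (t : Finset ι) (g : ι → (Fin n → ℝ) → ℝ)
    (h : ∀ i ∈ t, ConvexOn ℝ Set.univ (g i)) :
    ConvexOn ℝ Set.univ (fun f => ∑ i ∈ t, g i f) := by
  induction t using Finset.cons_induction with
  | empty => simpa using convexOn_const (0 : ℝ) convex_univ
  | cons i t hi ih =>
    simp only [Finset.sum_cons]
    exact (h i (Finset.mem_cons_self i t)).add
      (ih fun j hj => h j (Finset.mem_cons_of_mem hj))

lemma convexOn_univ_abs' : ConvexOn ℝ Set.univ (fun x : ℝ => |x|) := by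
  exact convexOn_univ_norm (E := ℝ)

/-- the mixed ℓ¹/ℓ² `f_d`-subproblem functional
`J f = (1/2)‖S(d − Af)‖₂² + (1/2)Σ_{ℓ∈Ω₁}|(Mf)_ℓ| + (1/2)Σ_{ℓ∈Ω₂}(Mf)_ℓ²`, with `M`
invertible and `Ω₁, Ω₂` a disjoint partition of the index set, is convex and attains its
infimum on `ℝ^n`. -/
theorem stmt2 (m n : ℕ) (S : Matrix (Fin m) (Fin m) ℝ) (A : Matrix (Fin m) (Fin n) ℝ)
    (d : Fin m → ℝ) (M : Matrix (Fin n) (Fin n) ℝ) (hM : IsUnit M.det)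
    (Ω₁ Ω₂ : Finset (Fin n)) (hdisj : Disjoint Ω₁ Ω₂) (hunion : Ω₁ ∪ Ω₂ = Finset.univ)
    (J : (Fin n → ℝ) → ℝ)
    (hJ : ∀ f, J f = (1 / 2) * enormSq (S.mulVec (d - A.mulVec f))
      + (1 / 2) * ∑ ℓ ∈ Ω₁, |M.mulVec f ℓ|
      + (1 / 2) * ∑ ℓ ∈ Ω₂, (M.mulVec f ℓ) ^ 2) :
    ConvexOn ℝ Set.univ J ∧ ∃ f : Fin n → ℝ, ∀ g : Fin n → ℝ, J f ≤ J g := by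
  have hJfun : J = fun f => (1 / 2) * enormSq (S.mulVec (d - A.mulVec f))
      + (1 / 2) * ∑ ℓ ∈ Ω₁, |M.mulVec f ℓ|
      + (1 / 2) * ∑ ℓ ∈ Ω₂, (M.mulVec f ℓ) ^ 2 := funext hJ
  subst hJfun
  -- helper: multiplying a convex function by 1/2
  have hhalf : ∀ (g : (Fin n → ℝ) → ℝ), ConvexOn ℝ Set.univ g →
      ConvexOn ℝ Set.univ (fun f => (1 / 2 : ℝ) * g f) := by
    intro g hg
    simpa [smul_eq_mul] using hg.smul (by norm_num : (0:ℝ) ≤ 1/2)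
  -- rewrite the coordinates as affine functions
  have hcoord : ∀ (f : Fin n → ℝ) (i : Fin m),
      S.mulVec (d - A.mulVec f) i
        = S.mulVec d i + (-(LinearMap.proj i ∘ₗ (S * A).mulVecLin)) f := by
    intro f i
    rw [Matrix.mulVec_sub, Matrix.mulVec_mulVec]
    simp [sub_eq_add_neg]
  have hMcoord : ∀ (f : Fin n → ℝ) (ℓ : Fin n),
      M.mulVec f ℓ = 0 + (LinearMap.proj ℓ ∘ₗ M.mulVecLin) f := by
    intro f ℓ; simp
  -- convexity
  have hconv1 : ConvexOn ℝ Set.univ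
      (fun f => enormSq (S.mulVec (d - A.mulVec f))) := by
    have : (fun f => enormSq (S.mulVec (d - A.mulVec f)))
        = fun f => ∑ i : Fin m,
            (fun x : ℝ => x ^ 2) (S.mulVec d i + (-(LinearMap.proj i ∘ₗ (S * A).mulVecLin)) f) := by
      funext f
      unfold enormSq
      exact Finset.sum_congr rfl fun i _ => by rw [hcoord f i]
    rw [this]
    exact convexOn_finset_sum _ _ fun i _ =>
      convexOn_comp_affine (Even.convexOn_pow even_two) _ _
  have hconv2 : ConvexOn ℝ Set.univ (fun f => ∑ ℓ ∈ Ω₁, |M.mulVec f ℓ|) := by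
    have : (fun f => ∑ ℓ ∈ Ω₁, |M.mulVec f ℓ|)
        = fun f => ∑ ℓ ∈ Ω₁, (fun x : ℝ => |x|) (0 + (LinearMap.proj ℓ ∘ₗ M.mulVecLin) f) := by
      funext f
      exact Finset.sum_congr rfl fun ℓ _ => by rw [hMcoord f ℓ]
    rw [this]
    exact convexOn_finset_sum _ _ fun ℓ _ => convexOn_comp_affine convexOn_univ_abs' _ _
  have hconv3 : ConvexOn ℝ Set.univ (fun f => ∑ ℓ ∈ Ω₂, (M.mulVec f ℓ) ^ 2) := by
    have : (fun f => ∑ ℓ ∈ Ω₂, (M.mulVec f ℓ) ^ 2)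
        = fun f => ∑ ℓ ∈ Ω₂, (fun x : ℝ => x ^ 2) (0 + (LinearMap.proj ℓ ∘ₗ M.mulVecLin) f) := by
      funext f
      exact Finset.sum_congr rfl fun ℓ _ => by rw [hMcoord f ℓ]
    rw [this]
    exact convexOn_finset_sum _ _ fun ℓ _ =>
      convexOn_comp_affine (Even.convexOn_pow even_two) _ _
  have hconv : ConvexOn ℝ Set.univ (fun f => (1 / 2) * enormSq (S.mulVec (d - A.mulVec f))
      + (1 / 2) * ∑ ℓ ∈ Ω₁, |M.mulVec f ℓ|
      + (1 / 2) * ∑ ℓ ∈ Ω₂, (M.mulVec f ℓ) ^ 2) :=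
    ((hhalf _ hconv1).add (hhalf _ hconv2)).add (hhalf _ hconv3)
  refine ⟨hconv, ?_⟩
  -- continuity
  have hMc : Continuous fun f : Fin n → ℝ => M.mulVec f := by
    exact LinearMap.continuous_of_finiteDimensional M.mulVecLin
  have hAc : Continuous fun f : Fin n → ℝ => A.mulVec f := by
    exact LinearMap.continuous_of_finiteDimensional A.mulVecLin
  have hSc : Continuous fun x : Fin m → ℝ => S.mulVec x := by
    exact LinearMap.continuous_of_finiteDimensional S.mulVecLin
  have hSAc : Continuous fun f : Fin n → ℝ => S.mulVec (d - A.mulVec f) :=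
    hSc.comp (continuous_const.sub hAc)
  have hcont : Continuous (fun f => (1 / 2) * enormSq (S.mulVec (d - A.mulVec f))
      + (1 / 2) * ∑ ℓ ∈ Ω₁, |M.mulVec f ℓ|
      + (1 / 2) * ∑ ℓ ∈ Ω₂, (M.mulVec f ℓ) ^ 2) := by
    unfold enormSq
    refine ((continuous_const.mul ?_).add (continuous_const.mul ?_)).add
      (continuous_const.mul ?_)
    · exact continuous_finset_sum _ fun i _ => ((continuous_apply i).comp hSAc).pow 2
    · exact continuous_finset_sum _ fun ℓ _ =>
        _root_.continuous_abs.comp ((continuous_apply ℓ).comp hMc)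
    · exact continuous_finset_sum _ fun ℓ _ => ((continuous_apply ℓ).comp hMc).pow 2
  -- coercivity: mulVec by an invertible matrix is a homeomorphism
  have : Invertible M := M.invertibleOfIsUnitDet hM
  let e : (Fin n → ℝ) ≃ₗ[ℝ] (Fin n → ℝ) := M.toLinearEquiv' this
  let he : (Fin n → ℝ) ≃ₜ (Fin n → ℝ) := e.toContinuousLinearEquiv.toHomeomorph
  have heeq : (he : (Fin n → ℝ) → (Fin n → ℝ)) = fun f => M.mulVec f := by
    funext f
    simp [he, e, Matrix.toLinearEquiv', Matrix.mulVecLin]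
  have hTc : Tendsto (fun f : Fin n → ℝ => M.mulVec f) (cocompact _) (cocompact _) := by
    rw [← heeq]; exact he.map_cocompact.le
  have hnormT : Tendsto (fun f : Fin n → ℝ => ‖M.mulVec f‖) (cocompact _) atTop :=
    tendsto_norm_cocompact_atTop.comp hTc
  -- lower bound: J f ≥ (1/2) * (‖M f‖ - n)
  have hbound : ∀ f : Fin n → ℝ,
      (1 / 2 : ℝ) * (‖M.mulVec f‖ - n)
        ≤ (1 / 2) * enormSq (S.mulVec (d - A.mulVec f))
          + (1 / 2) * ∑ ℓ ∈ Ω₁, |M.mulVec f ℓ|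
          + (1 / 2) * ∑ ℓ ∈ Ω₂, (M.mulVec f ℓ) ^ 2 := by
    intro f
    set y := M.mulVec f with hy
    have h0 : (0:ℝ) ≤ enormSq (S.mulVec (d - A.mulVec f)) :=
      Finset.sum_nonneg fun i _ => sq_nonneg _
    have hsum : ∑ ℓ : Fin n, (|y ℓ| - 1)
        ≤ ∑ ℓ ∈ Ω₁, |y ℓ| + ∑ ℓ ∈ Ω₂, (y ℓ) ^ 2 := by
      rw [← hunion, Finset.sum_union hdisj]
      gcongr with ℓ _ ℓ _
      · linarith [abs_nonneg (y ℓ)]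
      · nlinarith [abs_nonneg (y ℓ), sq_abs (y ℓ)]
    have hnorm : ‖y‖ ≤ ∑ ℓ : Fin n, |y ℓ| := by
      refine pi_norm_le_iff_of_nonneg (Finset.sum_nonneg fun ℓ _ => abs_nonneg _) |>.2
        fun i => ?_
      rw [Real.norm_eq_abs]
      exact Finset.single_le_sum (fun ℓ _ => abs_nonneg (y ℓ)) (Finset.mem_univ i)
    have hsum' : ‖y‖ - n ≤ ∑ ℓ ∈ Ω₁, |y ℓ| + ∑ ℓ ∈ Ω₂, (y ℓ) ^ 2 := by
      have : ∑ ℓ : Fin n, (|y ℓ| - 1) = (∑ ℓ : Fin n, |y ℓ|) - n := by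
        rw [Finset.sum_sub_distrib]
        simp
      linarith
    nlinarith
  have hlim : Tendsto (fun f => (1 / 2) * enormSq (S.mulVec (d - A.mulVec f))
      + (1 / 2) * ∑ ℓ ∈ Ω₁, |M.mulVec f ℓ|
      + (1 / 2) * ∑ ℓ ∈ Ω₂, (M.mulVec f ℓ) ^ 2) (cocompact _) atTop := by
    refine tendsto_atTop_mono hbound ?_
    have h1 : Tendsto (fun f : Fin n → ℝ => ‖M.mulVec f‖ - n) (cocompact _) atTop := by
      simpa [sub_eq_add_neg] using tendsto_atTop_add_const_right (cocompact _) (-(n:ℝ)) hnormT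
    exact h1.const_mul_atTop (by norm_num : (0:ℝ) < 1/2)
  exact hcont.exists_forall_le hlim
end

section
/- Let F : ℝ^n → ℝ be a convex function, 𝒻 : ℝ^n → ℝ^m any map, S a real m×m matrix, and d ∈ ℝ^m. Suppose (f^m)_{m≥1} ⊂ ℝ^n and (p^m)_{m≥1} ⊂ ℝ^n satisfy: p^m is a subgradient of F at f^m (i.e., F(u) ≥ F(f^m) + ⟨p^m, u − f^m⟩ for all u), and f^{m+1} is a global minimizer over ℝ^n of the map f ↦ F(f) − F(f^m) − ⟨p^m, f − f^m⟩ + (1/2)‖S(d − 𝒻(f))‖₂². Then the data-fitting error is non-increasing: ‖S(d − 𝒻(f^{m+1}))‖₂ ≤ ‖S(d − 𝒻(f^m))‖₂ for all m ≥ 1. -/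
open Matrix Finset

/-- Euclidean norm of a vector. -/
noncomputable def enorm {m : ℕ} (x : Fin m → ℝ) : ℝ := Real.sqrt (enormSq x)

/-- for the (modified) Bregman iterative algorithm with convex `F`, the
data-fitting error `‖S(d − 𝒻(f^m))‖₂` is non-increasing in `m ≥ 1`. -/
theorem stmt5 (n m : ℕ) (F : (Fin n → ℝ) → ℝ) (hF : ConvexOn ℝ Set.univ F)
    (𝒻 : (Fin n → ℝ) → (Fin m → ℝ)) (S : Matrix (Fin m) (Fin m) ℝ) (d : Fin m → ℝ)
    (f p : ℕ → (Fin n → ℝ))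
    (hsub : ∀ k : ℕ, 1 ≤ k → ∀ u : Fin n → ℝ,
      F (f k) + dotProduct (p k) (u - f k) ≤ F u)
    (hmin : ∀ k : ℕ, 1 ≤ k → ∀ u : Fin n → ℝ,
      F (f (k + 1)) - F (f k) - dotProduct (p k) (f (k + 1) - f k)
          + (1 / 2) * enormSq (S.mulVec (d - 𝒻 (f (k + 1))))
        ≤ F u - F (f k) - dotProduct (p k) (u - f k)
          + (1 / 2) * enormSq (S.mulVec (d - 𝒻 u))) :
    ∀ k : ℕ, 1 ≤ k →
      _root_.enorm (S.mulVec (d - 𝒻 (f (k + 1)))) ≤ _root_.enorm (S.mulVec (d - 𝒻 (f k))) := by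
  intro k hk
  have h1 := hmin k hk (f k)
  have h2 := hsub k hk (f (k + 1))
  simp only [sub_self, dotProduct_zero] at h1
  have hB : 0 ≤ F (f (k + 1)) - F (f k) - dotProduct (p k) (f (k + 1) - f k) := by
    linarith
  have hle : enormSq (S.mulVec (d - 𝒻 (f (k + 1)))) ≤ enormSq (S.mulVec (d - 𝒻 (f k))) := by
    linarith
  exact Real.sqrt_le_sqrt hle
end

section
/- Let F : ℝ^n → ℝ be a convex function with Bregman distance D_F^p(u,v) := F(u) − F(v) − ⟨p, u − v⟩, let A be a real m×n matrix, S a real m×m matrix, and d ∈ ℝ^m. Suppose p^{m-1} is a subgradient of F at f^{m-1}, that f^m is a global minimizer over ℝ^n of f ↦ D_F^{p^{m-1}}(f, f^{m-1}) + (1/2)‖S(d − Af)‖₂², and that p^m = p^{m-1} − AᵀSᵀS(Af^m − d). Then for every f* ∈ ℝ^n, D_F^{p^m}(f*, f^m) + (1/2)‖S(Af^m − d)‖₂² ≤ D_F^{p^{m-1}}(f*, f^{m-1}) + (1/2)‖S(Af* − d)‖₂². -/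
open Matrix Finset

/-- The Bregman distance `D_F^p(u,v) = F(u) − F(v) − ⟨p, u − v⟩`. -/
noncomputable def bregman {n : ℕ} (F : (Fin n → ℝ) → ℝ) (p u v : Fin n → ℝ) : ℝ :=
  F u - F v - dotProduct p (u - v)

lemma quad_ident {m : ℕ} (x y : Fin m → ℝ) :
    dotProduct x (y - x)
      = (1 / 2) * enormSq y - (1 / 2) * enormSq x - (1 / 2) * enormSq (y - x) := by
  simp only [enormSq, dotProduct, Pi.sub_apply, Finset.mul_sum,
    ← Finset.sum_sub_distrib]
  exact Finset.sum_congr rfl fun i _ => by ring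

/-- one-step descent inequality for the Bregman iterative algorithm with a
linear forward operator: if `pᵐ⁻¹` is a subgradient of the convex `F` at `fᵐ⁻¹`, `fᵐ`
globally minimizes `f ↦ D_F^{pᵐ⁻¹}(f, fᵐ⁻¹) + (1/2)‖S(d − Af)‖₂²`, and
`pᵐ = pᵐ⁻¹ − AᵀSᵀS(Afᵐ − d)`, then for every `f*`,
`D_F^{pᵐ}(f*, fᵐ) + (1/2)‖S(Afᵐ − d)‖₂² ≤ D_F^{pᵐ⁻¹}(f*, fᵐ⁻¹) + (1/2)‖S(Af* − d)‖₂²`. -/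
theorem stmt11 (m n : ℕ) (F : (Fin n → ℝ) → ℝ) (hF : ConvexOn ℝ Set.univ F)
    (A : Matrix (Fin m) (Fin n) ℝ) (S : Matrix (Fin m) (Fin m) ℝ) (d : Fin m → ℝ)
    (fm1 fm pm1 pm : Fin n → ℝ)
    (hsub : ∀ u : Fin n → ℝ, F fm1 + dotProduct pm1 (u - fm1) ≤ F u)
    (hmin : ∀ f : Fin n → ℝ,
      bregman F pm1 fm fm1 + (1 / 2) * enormSq (S.mulVec (d - A.mulVec fm))
        ≤ bregman F pm1 f fm1 + (1 / 2) * enormSq (S.mulVec (d - A.mulVec f)))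
    (hpm : pm = pm1 - (Aᵀ * Sᵀ * S).mulVec (A.mulVec fm - d)) :
    ∀ fstar : Fin n → ℝ,
      bregman F pm fstar fm + (1 / 2) * enormSq (S.mulVec (A.mulVec fm - d))
        ≤ bregman F pm1 fstar fm1
          + (1 / 2) * enormSq (S.mulVec (A.mulVec fstar - d)) := by
  intro fstar
  set x := S.mulVec (A.mulVec fm - d) with hx
  set y := S.mulVec (A.mulVec fstar - d) with hy
  -- the matrix dot product equals x ⬝ (y - x)
  have hdot : dotProduct ((Aᵀ * Sᵀ * S).mulVec (A.mulVec fm - d)) (fstar - fm)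
      = dotProduct x (y - x) := by
    have h1 : (Aᵀ * Sᵀ * S).mulVec (A.mulVec fm - d)
        = Aᵀ.mulVec (Sᵀ.mulVec x) := by
      rw [hx, ← Matrix.mulVec_mulVec, ← Matrix.mulVec_mulVec]
    have h2 : y - x = S.mulVec (A.mulVec (fstar - fm)) := by
      simp only [hx, hy, Matrix.mulVec_sub]
      abel
    rw [h1, h2, Matrix.mulVec_transpose, ← dotProduct_mulVec,
      Matrix.mulVec_transpose, ← dotProduct_mulVec]
  have hq := quad_ident x y
  have hnn := enormSq_nonneg (y - x)
  have hs := hsub fm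
  have hsplit : dotProduct pm1 (fstar - fm1)
      = dotProduct pm1 (fstar - fm) + dotProduct pm1 (fm - fm1) := by
    rw [← dotProduct_add]
    congr 1
    abel
  simp only [bregman, hpm, sub_dotProduct, hdot]
  linarith
end

section
/- Let F : ℝ^n → ℝ be a convex function with F ≥ 0, let A be a real m×n matrix, S a real m×m matrix, d ∈ ℝ^m, and N a positive integer. Let f^0 ∈ ℝ^n, p^0 = 0, and for m = 1,…,N let f^m be a global minimizer over ℝ^n of f ↦ F(f) − F(f^{m-1}) − ⟨p^{m-1}, f − f^{m-1}⟩ + (1/2)‖S(d − Af)‖₂², and set p^m = p^{m-1} − AᵀSᵀS(Af^m − d). Then for every f* ∈ ℝ^n, F(f*) − F(f^N) − ⟨p^N, f* − f^N⟩ + (1/2)Σ_{m=1}^{N}‖S(Af^m − d)‖₂² ≤ F(f*) + (N/2)‖S(Af* − d)‖₂². -/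
open Matrix Finset

lemma enormSq_eq_dot {m : ℕ} (x : Fin m → ℝ) : enormSq x = x ⬝ᵥ x := by
  simp [enormSq, dotProduct, sq]

lemma dot_adj {m n : ℕ} (A : Matrix (Fin m) (Fin n) ℝ) (S : Matrix (Fin m) (Fin m) ℝ)
    (z : Fin m → ℝ) (w : Fin n → ℝ) :
    ((Aᵀ * Sᵀ * S).mulVec z) ⬝ᵥ w = (S.mulVec z) ⬝ᵥ (S.mulVec (A.mulVec w)) := by
  rw [← Matrix.mulVec_mulVec, ← Matrix.mulVec_mulVec, Matrix.mulVec_transpose,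
    Matrix.mulVec_transpose, ← Matrix.dotProduct_mulVec, ← Matrix.dotProduct_mulVec]

lemma enormSq_sub_smul {m : ℕ} (x y : Fin m → ℝ) (t : ℝ) :
    enormSq (x - t • y) = enormSq x - 2*t*(x ⬝ᵥ y) + t^2 * enormSq y := by
  simp only [enormSq_eq_dot, sub_dotProduct, dotProduct_sub,
    smul_dotProduct, dotProduct_smul, smul_eq_mul, dotProduct_comm y x]
  ring

lemma pos_lin_quad {B Q : ℝ} (hQ : 0 ≤ Q) (h : ∀ t : ℝ, 0 < t → t ≤ 1 → 0 ≤ t*B + t^2/2*Q) :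
    0 ≤ B := by
  by_contra hB
  push_neg at hB
  rcases eq_or_lt_of_le hQ with hQ0 | hQ0
  · have := h 1 one_pos le_rfl; nlinarith
  · set t : ℝ := min 1 (-B/Q) with ht
    have ht0 : 0 < t := lt_min one_pos (div_pos (by linarith) hQ0)
    have ht1 : t ≤ 1 := min_le_left _ _
    have htQ : t * Q ≤ -B := by
      have : t ≤ -B/Q := min_le_right _ _
      calc t * Q ≤ (-B/Q) * Q := by nlinarith
        _ = -B := by field_simp
    have := h t ht0 ht1
    nlinarith

lemma subgrad (m n : ℕ) (F : (Fin n → ℝ) → ℝ) (hF : ConvexOn ℝ Set.univ F)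
    (A : Matrix (Fin m) (Fin n) ℝ) (S : Matrix (Fin m) (Fin m) ℝ) (d : Fin m → ℝ)
    (N : ℕ) (f p : ℕ → (Fin n → ℝ))
    (hmin : ∀ k : ℕ, 1 ≤ k → k ≤ N → ∀ u : Fin n → ℝ,
      F (f k) - F (f (k - 1)) - dotProduct (p (k - 1)) (f k - f (k - 1))
          + (1 / 2) * enormSq (S.mulVec (d - A.mulVec (f k)))
        ≤ F u - F (f (k - 1)) - dotProduct (p (k - 1)) (u - f (k - 1))
          + (1 / 2) * enormSq (S.mulVec (d - A.mulVec u)))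
    (hp : ∀ k : ℕ, 1 ≤ k → k ≤ N →
      p k = p (k - 1) - (Aᵀ * Sᵀ * S).mulVec (A.mulVec (f k) - d))
    (k : ℕ) (hk1 : 1 ≤ k) (hkN : k ≤ N) (u : Fin n → ℝ) :
    F (f k) + (p k) ⬝ᵥ (u - f k) ≤ F u := by
  set g := f k with hg
  set w := u - g with hw
  set Q := enormSq (S.mulVec (A.mulVec w)) with hQdef
  have hQ : 0 ≤ Q := enormSq_nonneg _
  set B := F u - F g - (p k) ⬝ᵥ w with hB
  have key : ∀ t : ℝ, 0 < t → t ≤ 1 → 0 ≤ t*B + t^2/2*Q := by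
    intro t ht0 ht1
    have hv := hmin k hk1 hkN (g + t • w)
    -- convexity
    have hconv : F (g + t • w) ≤ (1-t) * F g + t * F u := by
      have := hF.2 (Set.mem_univ g) (Set.mem_univ u) (by linarith : (0:ℝ) ≤ 1 - t)
        (le_of_lt ht0) (by ring)
      simpa using le_trans (le_of_eq (by congr 1; rw [hw]; module)) this
    -- quadratic expansion
    have hlin : S.mulVec (d - A.mulVec (g + t • w))
        = S.mulVec (d - A.mulVec g) - t • S.mulVec (A.mulVec w) := by
      have h1 : d - A.mulVec (g + t • w) = (d - A.mulVec g) - t • (A.mulVec w) := by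
        rw [Matrix.mulVec_add, Matrix.mulVec_smul]; abel
      rw [h1, Matrix.mulVec_sub, Matrix.mulVec_smul]
    have hquad : enormSq (S.mulVec (d - A.mulVec (g + t • w)))
        = enormSq (S.mulVec (d - A.mulVec g))
          - 2*t*((S.mulVec (d - A.mulVec g)) ⬝ᵥ (S.mulVec (A.mulVec w)))
          + t^2 * Q := by
      rw [hlin, enormSq_sub_smul]
    -- dot product rearrangements
    have hdot1 : (p (k-1)) ⬝ᵥ ((g + t • w) - f (k-1))
        = (p (k-1)) ⬝ᵥ (g - f (k-1)) + t * ((p (k-1)) ⬝ᵥ w) := by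
      have : (g + t • w) - f (k-1) = (g - f (k-1)) + t • w := by module
      rw [this, dotProduct_add, dotProduct_smul, smul_eq_mul]
    -- p k ⬝ᵥ w relation
    have hpk : (p k) ⬝ᵥ w = (p (k-1)) ⬝ᵥ w + (S.mulVec (d - A.mulVec g)) ⬝ᵥ (S.mulVec (A.mulVec w)) := by
      rw [hp k hk1 hkN, sub_dotProduct, dot_adj]
      have : S.mulVec (d - A.mulVec g) = - S.mulVec (A.mulVec g - d) := by
        rw [← Matrix.mulVec_neg]; congr 1; abel
      rw [this, neg_dotProduct]
      ring
    rw [hquad, hdot1] at hv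
    have hv2 : 0 ≤ (F (g + t • w) - F g) - t * ((p (k-1)) ⬝ᵥ w)
        - t * ((S.mulVec (d - A.mulVec g)) ⬝ᵥ (S.mulVec (A.mulVec w))) + t^2/2 * Q := by
      nlinarith [hv]
    have : F (g + t • w) - F g ≤ t * (F u - F g) := by nlinarith [hconv]
    nlinarith [hpk, hv2, this]
  have := pos_lin_quad hQ key
  simp only [hB] at this
  linarith
-- step inequality (pure algebra)
lemma step_ineq (m n : ℕ) (F : (Fin n → ℝ) → ℝ)
    (A : Matrix (Fin m) (Fin n) ℝ) (S : Matrix (Fin m) (Fin m) ℝ) (d : Fin m → ℝ)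
    (N : ℕ) (f p : ℕ → (Fin n → ℝ))
    (hp : ∀ k : ℕ, 1 ≤ k → k ≤ N →
      p k = p (k - 1) - (Aᵀ * Sᵀ * S).mulVec (A.mulVec (f k) - d))
    (k : ℕ) (hk1 : 1 ≤ k) (hkN : k ≤ N) (fstar : Fin n → ℝ) :
    F fstar - F (f k) - (p k) ⬝ᵥ (fstar - f k)
        + (1/2) * enormSq (S.mulVec (A.mulVec (f k) - d))
      ≤ (F fstar - F (f (k-1)) - (p (k-1)) ⬝ᵥ (fstar - f (k-1)))
        + (1/2) * enormSq (S.mulVec (A.mulVec fstar - d))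
        + (F (f (k-1)) - F (f k) - (p (k-1)) ⬝ᵥ (f (k-1) - f k)) := by
  set g := f k
  set a := S.mulVec (A.mulVec g - d) with ha
  set b := S.mulVec (A.mulVec fstar - d) with hb
  have e1 : ((Aᵀ * Sᵀ * S).mulVec (A.mulVec g - d)) ⬝ᵥ (fstar - g) = a ⬝ᵥ (b - a) := by
    rw [dot_adj]
    congr 1
    rw [Matrix.mulVec_sub, Matrix.mulVec_sub, ha, hb, Matrix.mulVec_sub, Matrix.mulVec_sub]
    abel
  have e2 : a ⬝ᵥ (b - a) = a ⬝ᵥ b - enormSq a := by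
    rw [dotProduct_sub, enormSq_eq_dot]
  have e3 : enormSq (a - b) = enormSq a - 2*(a ⬝ᵥ b) + enormSq b := by
    have := enormSq_sub_smul a b 1
    simpa using this
  have e4 : 0 ≤ enormSq (a - b) := enormSq_nonneg _
  have e5 : (p k) ⬝ᵥ (fstar - g) = (p (k-1)) ⬝ᵥ (fstar - g)
      - ((Aᵀ * Sᵀ * S).mulVec (A.mulVec g - d)) ⬝ᵥ (fstar - g) := by
    rw [hp k hk1 hkN, sub_dotProduct]
  have e6 : (p (k-1)) ⬝ᵥ (fstar - g)
      = (p (k-1)) ⬝ᵥ (fstar - f (k-1)) + (p (k-1)) ⬝ᵥ (f (k-1) - g) := by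
    rw [← dotProduct_add]
    congr 1
    abel
  linarith


/-- telescoped estimate for the Bregman iterative algorithm with zero initial
subgradient: for convex `F ≥ 0` and any `f*`,
`F(f*) − F(f^N) − ⟨p^N, f* − f^N⟩ + (1/2)Σ_{m=1}^{N}‖S(Af^m − d)‖₂²
  ≤ F(f*) + (N/2)‖S(Af* − d)‖₂²`. -/
theorem stmt12 (m n : ℕ) (F : (Fin n → ℝ) → ℝ) (hF : ConvexOn ℝ Set.univ F)
    (hFpos : ∀ f, 0 ≤ F f)
    (A : Matrix (Fin m) (Fin n) ℝ) (S : Matrix (Fin m) (Fin m) ℝ) (d : Fin m → ℝ)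
    (N : ℕ) (hN : 1 ≤ N) (f p : ℕ → (Fin n → ℝ)) (hp0 : p 0 = 0)
    (hmin : ∀ k : ℕ, 1 ≤ k → k ≤ N → ∀ u : Fin n → ℝ,
      F (f k) - F (f (k - 1)) - dotProduct (p (k - 1)) (f k - f (k - 1))
          + (1 / 2) * enormSq (S.mulVec (d - A.mulVec (f k)))
        ≤ F u - F (f (k - 1)) - dotProduct (p (k - 1)) (u - f (k - 1))
          + (1 / 2) * enormSq (S.mulVec (d - A.mulVec u)))
    (hp : ∀ k : ℕ, 1 ≤ k → k ≤ N →
      p k = p (k - 1) - (Aᵀ * Sᵀ * S).mulVec (A.mulVec (f k) - d)) :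
    ∀ fstar : Fin n → ℝ,
      F fstar - F (f N) - dotProduct (p N) (fstar - f N)
          + (1 / 2) * ∑ k ∈ Finset.Icc 1 N, enormSq (S.mulVec (A.mulVec (f k) - d))
        ≤ F fstar + ((N : ℝ) / 2) * enormSq (S.mulVec (A.mulVec fstar - d)) := by
  intro fstar
  have main : ∀ j : ℕ, 1 ≤ j → j ≤ N →
      F fstar - F (f j) - (p j) ⬝ᵥ (fstar - f j)
          + (1 / 2) * ∑ k ∈ Finset.Icc 1 j, enormSq (S.mulVec (A.mulVec (f k) - d))
        ≤ F fstar + ((j : ℝ) / 2) * enormSq (S.mulVec (A.mulVec fstar - d)) := by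
    intro j hj1
    induction j, hj1 using Nat.le_induction with
    | base =>
      intro h1N
      have hstep := step_ineq m n F A S d N f p hp 1 le_rfl h1N fstar
      simp only [Nat.sub_self, hp0, zero_dotProduct] at hstep
      rw [Finset.Icc_self, Finset.sum_singleton]
      have := hFpos (f 1)
      push_cast
      linarith
    | succ j hj ih =>
      intro hjN
      have hjN' : j ≤ N := by omega
      have ih' := ih hjN'
      have hstep := step_ineq m n F A S d N f p hp (j+1) (by omega) hjN fstar
      simp only [Nat.add_sub_cancel] at hstep
      have hsub := subgrad m n F hF A S d N f p hmin hp j hj hjN' (f (j+1))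
      have hneg : (p j) ⬝ᵥ (f j - f (j+1)) = - ((p j) ⬝ᵥ (f (j+1) - f j)) := by
        rw [← dotProduct_neg]
        congr 1
        abel
      have hbr : F (f j) - F (f (j+1)) - (p j) ⬝ᵥ (f j - f (j+1)) ≤ 0 := by
        rw [hneg]; linarith
      rw [Finset.sum_Icc_succ_top (by omega : 1 ≤ j+1)]
      push_cast
      linarith
  have := main N hN le_rfl
  exact this
end

section
/- Let F : ℝ^n → ℝ be a convex function with F ≥ 0, let A be a real m×n matrix, S a real m×m matrix, d ∈ ℝ^m, and N a positive integer. Let f^0 ∈ ℝ^n, p^0 = 0, and for m = 1,…,N let f^m be a global minimizer over ℝ^n of f ↦ F(f) − F(f^{m-1}) − ⟨p^{m-1}, f − f^{m-1}⟩ + (1/2)‖S(d − Af)‖₂², and set p^m = p^{m-1} − AᵀSᵀS(Af^m − d). Then for every f* ∈ ℝ^n, ‖S(d − Af^N)‖₂² ≤ (2/N)·F(f*) + ‖S(Af* − d)‖₂². -/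
open Matrix Finset

lemma enormSq_neg' {m : ℕ} (x : Fin m → ℝ) : enormSq (-x) = enormSq x := by
  simp [enormSq]

lemma young' {m : ℕ} (a b : Fin m → ℝ) :
    a ⬝ᵥ b ≤ (1/2)*enormSq a + (1/2)*enormSq b := by
  have h := enormSq_nonneg (a - (1:ℝ) • b)
  rw [enormSq_sub_smul] at h
  nlinarith [h]

lemma le_zero_of_forall_unit (c B : ℝ) (hB : 0 ≤ B)
    (h : ∀ t : ℝ, 0 < t → t ≤ 1 → c ≤ t * B) : c ≤ 0 := by
  by_contra hc
  push_neg at hc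
  have ht1 : (0:ℝ) < min 1 (c / (2*(B+1))) := by
    apply lt_min one_pos
    positivity
  have h2 := h _ ht1 (min_le_left _ _)
  have h3 : min 1 (c / (2*(B+1))) * B ≤ (c / (2*(B+1))) * (B+1) := by
    apply mul_le_mul (min_le_right _ _) (by linarith) hB
    positivity
  have h4 : (c / (2*(B+1))) * (B+1) = c/2 := by
    field_simp
  linarith

lemma tmul_dot {m n : ℕ} (M : Matrix (Fin m) (Fin n) ℝ) (y : Fin m → ℝ) (v : Fin n → ℝ) :
    (Mᵀ.mulVec y) ⬝ᵥ v = y ⬝ᵥ (M.mulVec v) := by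
  simp only [Matrix.mulVec, dotProduct, Matrix.transpose_apply,
    Finset.sum_mul, Finset.mul_sum]
  rw [Finset.sum_comm]
  apply Finset.sum_congr rfl; intros i _
  apply Finset.sum_congr rfl; intros j _
  ring

lemma ATS_dot {m n : ℕ} (A : Matrix (Fin m) (Fin n) ℝ) (S : Matrix (Fin m) (Fin m) ℝ)
    (w : Fin m → ℝ) (v : Fin n → ℝ) :
    ((Aᵀ * Sᵀ * S).mulVec w) ⬝ᵥ v = (S.mulVec w) ⬝ᵥ (S.mulVec (A.mulVec v)) := by
  rw [Matrix.mul_assoc, ← Matrix.mulVec_mulVec, ← Matrix.mulVec_mulVec, tmul_dot, tmul_dot]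

/-- error estimate for the Bregman iterative algorithm with zero initial
subgradient: for convex `F ≥ 0` and any `f*`,
`‖S(d − Af^N)‖₂² ≤ (2/N)·F(f*) + ‖S(Af* − d)‖₂²`. -/
theorem stmt13 (m n : ℕ) (F : (Fin n → ℝ) → ℝ) (hF : ConvexOn ℝ Set.univ F)
    (hFpos : ∀ f, 0 ≤ F f)
    (A : Matrix (Fin m) (Fin n) ℝ) (S : Matrix (Fin m) (Fin m) ℝ) (d : Fin m → ℝ)
    (N : ℕ) (hN : 1 ≤ N) (f p : ℕ → (Fin n → ℝ)) (hp0 : p 0 = 0)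
    (hmin : ∀ k : ℕ, 1 ≤ k → k ≤ N → ∀ u : Fin n → ℝ,
      F (f k) - F (f (k - 1)) - dotProduct (p (k - 1)) (f k - f (k - 1))
          + (1 / 2) * enormSq (S.mulVec (d - A.mulVec (f k)))
        ≤ F u - F (f (k - 1)) - dotProduct (p (k - 1)) (u - f (k - 1))
          + (1 / 2) * enormSq (S.mulVec (d - A.mulVec u)))
    (hp : ∀ k : ℕ, 1 ≤ k → k ≤ N →
      p k = p (k - 1) - (Aᵀ * Sᵀ * S).mulVec (A.mulVec (f k) - d)) :
    ∀ fstar : Fin n → ℝ,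
      enormSq (S.mulVec (d - A.mulVec (f N)))
        ≤ (2 / (N : ℝ)) * F fstar
          + enormSq (S.mulVec (A.mulVec fstar - d)) := by
  intro fstar
  -- notations
  set e : ℕ → ℝ := fun k => enormSq (S.mulVec (d - A.mulVec (f k))) with he
  set q : ℝ := enormSq (S.mulVec (d - A.mulVec fstar)) with hq
  have hqq : enormSq (S.mulVec (A.mulVec fstar - d)) = q := by
    rw [hq, show A.mulVec fstar - d = -(d - A.mulVec fstar) from (neg_sub _ _).symm,
      Matrix.mulVec_neg, enormSq_neg']
  rw [hqq]
  -- dot product form of the p-update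
  have hpdot : ∀ k, 1 ≤ k → k ≤ N → ∀ v : Fin n → ℝ,
      p k ⬝ᵥ v = p (k-1) ⬝ᵥ v
        + (S.mulVec (d - A.mulVec (f k))) ⬝ᵥ (S.mulVec (A.mulVec v)) := by
    intro k hk1 hkN v
    rw [hp k hk1 hkN, sub_dotProduct, ATS_dot,
      show A.mulVec (f k) - d = -(d - A.mulVec (f k)) from (neg_sub _ _).symm,
      Matrix.mulVec_neg, neg_dotProduct]
    ring
  -- subgradient property
  have subgrad : ∀ k, 1 ≤ k → k ≤ N → ∀ u : Fin n → ℝ,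
      F (f k) + p k ⬝ᵥ (u - f k) ≤ F u := by
    intro k hk1 hkN u
    set g := f k with hg
    set v : Fin n → ℝ := u - g with hv
    set a : Fin m → ℝ := S.mulVec (d - A.mulVec g) with ha
    set b : Fin m → ℝ := S.mulVec (A.mulVec v) with hb
    have key : ∀ t : ℝ, 0 < t → t ≤ 1 →
        F g - F u + p (k-1) ⬝ᵥ v + a ⬝ᵥ b ≤ t * (enormSq b / 2) := by
      intro t ht0 ht1
      have hmink := hmin k hk1 hkN (g + t • v)
      have hconv := hF.2 (Set.mem_univ g) (Set.mem_univ u)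
        (show (0:ℝ) ≤ 1 - t by linarith) (le_of_lt ht0) (by ring)
      have hcomb : (1 - t) • g + t • u = g + t • v := by
        rw [hv]; module
      rw [hcomb, smul_eq_mul, smul_eq_mul] at hconv
      have hsplit : g + t • v - f (k-1) = (g - f (k-1)) + t • v := by abel
      have hdot : p (k-1) ⬝ᵥ (g + t • v - f (k-1)) =
          p (k-1) ⬝ᵥ (g - f (k-1)) + t * (p (k-1) ⬝ᵥ v) := by
        rw [hsplit, dotProduct_add, dotProduct_smul, smul_eq_mul]
      have hres : S.mulVec (d - A.mulVec (g + t • v)) = a - t • b := by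
        rw [ha, hb, Matrix.mulVec_add, Matrix.mulVec_smul,
          show d - (A.mulVec g + t • A.mulVec v)
            = (d - A.mulVec g) - t • A.mulVec v from by abel,
          Matrix.mulVec_sub, Matrix.mulVec_smul]
      rw [hres, hdot, enormSq_sub_smul] at hmink
      have h2 : t * (F g - F u + p (k-1) ⬝ᵥ v + a ⬝ᵥ b)
          ≤ t * (t * (enormSq b / 2)) := by nlinarith [hmink, hconv]
      exact le_of_mul_le_mul_left h2 ht0
    have hc : F g - F u + p (k-1) ⬝ᵥ v + a ⬝ᵥ b ≤ 0 := by
      apply le_zero_of_forall_unit _ _ _ key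
      have := enormSq_nonneg b
      linarith
    have hpk : p k ⬝ᵥ v = p (k-1) ⬝ᵥ v + a ⬝ᵥ b := hpdot k hk1 hkN v
    linarith
  -- Bregman distance to fstar
  set D : ℕ → ℝ := fun k => F fstar - F (f k) - p k ⬝ᵥ (fstar - f k) with hD
  -- one-step estimate
  have step : ∀ k, 1 ≤ k → k ≤ N →
      D k + (F (f k) - F (f (k-1)) - p (k-1) ⬝ᵥ (f k - f (k-1))) + (1/2) * e k
        ≤ D (k-1) + (1/2) * q := by
    intro k hk1 hkN
    have h2 := hpdot k hk1 hkN (fstar - f k)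
    have h1 : S.mulVec (A.mulVec (fstar - f k))
        = S.mulVec (d - A.mulVec (f k)) - S.mulVec (d - A.mulVec fstar) := by
      rw [Matrix.mulVec_sub, Matrix.mulVec_sub, Matrix.mulVec_sub S d,
        Matrix.mulVec_sub S d]
      abel
    rw [h1, dotProduct_sub] at h2
    have haa : (S.mulVec (d - A.mulVec (f k))) ⬝ᵥ (S.mulVec (d - A.mulVec (f k)))
        = e k := (enormSq_eq_dot _).symm
    have hyoung := young' (S.mulVec (d - A.mulVec (f k))) (S.mulVec (d - A.mulVec fstar))
    have hlin : p (k-1) ⬝ᵥ (fstar - f k)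
        = p (k-1) ⬝ᵥ (fstar - f (k-1)) - p (k-1) ⬝ᵥ (f k - f (k-1)) := by
      rw [← dotProduct_sub]
      congr 1
      abel
    have h3 : p k ⬝ᵥ (fstar - f k) = p k ⬝ᵥ fstar - p k ⬝ᵥ f k :=
      dotProduct_sub _ _ _
    have h4 : (S.mulVec (d - A.mulVec (f k))) ⬝ᵥ
          (S.mulVec (d - A.mulVec (f k)) - S.mulVec (d - A.mulVec fstar))
        = (S.mulVec (d - A.mulVec (f k))) ⬝ᵥ (S.mulVec (d - A.mulVec (f k)))
          - (S.mulVec (d - A.mulVec (f k))) ⬝ᵥ (S.mulVec (d - A.mulVec fstar)) :=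
      dotProduct_sub _ _ _
    simp only [hD, he, hq] at *
    linarith
  -- monotonicity of residuals
  have emono : ∀ k, 2 ≤ k → k ≤ N → e k ≤ e (k-1) := by
    intro k hk2 hkN
    have hmink := hmin k (by omega) hkN (f (k-1))
    simp only [sub_self, dotProduct_zero] at hmink
    have hsg := subgrad (k-1) (by omega) (by omega) (f k)
    simp only [he] at *
    linarith
  have mono : ∀ k, 1 ≤ k → k ≤ N → e N ≤ e k := by
    have chain : ∀ j : ℕ, ∀ k, 1 ≤ k → k + j ≤ N → e (k + j) ≤ e k := by
      intro j
      induction j with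
      | zero => intro k _ _; simp
      | succ j ih =>
        intro k hk1 hkj
        have h1 := ih k hk1 (by omega)
        have h2 := emono (k + j + 1) (by omega) (by omega)
        simp only [Nat.add_sub_cancel] at h2
        have : k + (j + 1) = k + j + 1 := by omega
        rw [this]
        linarith
    intro k hk1 hkN
    have hkk : k + (N - k) = N := by omega
    have := chain (N - k) k hk1 (by omega)
    rwa [hkk] at this
  -- telescoped estimate
  have main : ∀ k, 1 ≤ k → k ≤ N →
      D k + ((k : ℝ)/2) * e N ≤ F fstar + ((k : ℝ)/2) * q := by
    intro k hk1
    induction k, hk1 using Nat.le_induction with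
    | base =>
      intro h1N
      have hs := step 1 le_rfl h1N
      simp only [Nat.sub_self] at hs
      have hD0 : D 0 = F fstar - F (f 0) := by
        simp [hD, hp0]
      have hbreg : p 0 ⬝ᵥ (f 1 - f 0) = 0 := by simp [hp0]
      have h1 := hFpos (f 1)
      have h2 := mono 1 le_rfl h1N
      rw [hD0, hbreg] at hs
      push_cast
      linarith
    | succ k hk ih =>
      intro hkN
      have hih := ih (by omega)
      have hs := step (k+1) (by omega) hkN
      simp only [Nat.add_sub_cancel] at hs
      have hbreg : 0 ≤ F (f (k+1)) - F (f k) - p k ⬝ᵥ (f (k+1) - f k) := by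
        have := subgrad k hk (by omega) (f (k+1))
        linarith
      have h2 := mono (k+1) (by omega) hkN
      push_cast
      push_cast at hih
      linarith
  -- conclude
  have hmainN := main N hN le_rfl
  have hDN : 0 ≤ D N := by
    have := subgrad N hN le_rfl fstar
    simp only [hD]
    linarith
  have heN : enormSq (S.mulVec (d - A.mulVec (f N))) = e N := rfl
  rw [heN]
  clear_value e q D
  have hN0 : (0:ℝ) < (N:ℝ) := by positivity
  have h1 : (N:ℝ) * (e N) ≤ (N:ℝ) * ((2/(N:ℝ)) * F fstar + q) := by
    have heq : (N:ℝ) * ((2/(N:ℝ)) * F fstar + q) = 2 * F fstar + (N:ℝ) * q := by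
      field_simp
    rw [heq]
    have h5 : (N:ℝ) * e N = 2 * ((N:ℝ)/2 * e N) := by ring
    have h6 : (N:ℝ) * q = 2 * ((N:ℝ)/2 * q) := by ring
    linarith
  exact le_of_mul_le_mul_left h1 hN0
end
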